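/- Consider a bipartite transportation polytope: variables y_{i,s} ≥ 0 for i in a finite set N and s in a finite set S, with ∑_s y_{i,s} = 1 for every i, and integer lower/upper bounds L_j ≤ ∑_{(i,s)∈E_j} y_{i,s} ≤ U_j for a laminar family of constraint sets E_j on the school side partitioning coordinates by (type, school) groups. If this polytope is nonempty, then it has an integral point. -/

import Mathlib

open Finset

lemma exists_ker {α : Type} [Fintype α] [DecidableEq α] (G : Finset (Finset α))
    (hcard : G.card < Fintype.card α) :
    ∃ d : α → ℝ, d ≠ 0 ∧ ∀ T ∈ G, ∑ p ∈ T, d p = 0 := by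
  classical
  set Φ : (α → ℝ) →ₗ[ℝ] ({T // T ∈ G} → ℝ) :=
    LinearMap.pi (fun T => ∑ p ∈ T.1, LinearMap.proj p) with hΦdef
  have hΦ : ∀ d (T : {T // T ∈ G}), Φ d T = ∑ p ∈ T.1, d p := by
    intro d T
    simp [hΦdef, LinearMap.pi_apply, LinearMap.sum_apply, LinearMap.proj_apply]
  have hni : ¬ Function.Injective Φ := by
    intro hinj
    have := LinearMap.finrank_le_finrank_of_injective hinj
    rw [Module.finrank_fintype_fun_eq_card, Module.finrank_fintype_fun_eq_card,
      Fintype.card_coe] at this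
    omega
  rw [Function.not_injective_iff] at hni
  obtain ⟨x, z, hxz, hne⟩ := hni
  refine ⟨x - z, sub_ne_zero.2 hne, ?_⟩
  intro T hT
  have : Φ (x - z) ⟨T, hT⟩ = 0 := by rw [map_sub]; simp [hxz]
  rw [hΦ] at this
  simpa using this

lemma intSum {β : Type} (T : Finset β) (f : β → ℝ) (h : ∀ p ∈ T, ∃ k : ℤ, f p = k) :
    ∃ k : ℤ, ∑ p ∈ T, f p = k := by
  classical
  induction T using Finset.induction_on with
  | empty => exact ⟨0, by simp⟩
  | @insert a s ha ih =>
    obtain ⟨k, hk⟩ := h a (mem_insert_self a s)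
    obtain ⟨m, hm⟩ := ih (fun p hp => h p (mem_insert_of_mem hp))
    exact ⟨k + m, by rw [Finset.sum_insert ha, hk, hm]; push_cast; ring⟩

lemma sum_ext {β : Type} [Fintype β] [DecidableEq β] (F T : Finset β) (d₀ : {p // p ∈ F} → ℝ) :
    ∑ p ∈ T, (if h : p ∈ F then d₀ ⟨p, h⟩ else 0) =
      ∑ q ∈ Finset.univ.filter (fun q : {p // p ∈ F} => ↑q ∈ T), d₀ q := by
  classical
  rw [← Finset.sum_filter_of_ne (f := fun p => if h : p ∈ F then d₀ ⟨p, h⟩ else 0)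
    (p := fun p => p ∈ F) (by intro x hx hne; by_contra h; simp [h] at hne)]
  refine Finset.sum_bij' (fun p hp => ⟨p, (Finset.mem_filter.1 hp).2⟩)
    (fun q hq => (q : β)) ?_ ?_ ?_ ?_ ?_
  · intro p hp
    simp [Finset.mem_filter, (Finset.mem_filter.1 hp).1]
  · intro q hq
    have := (Finset.mem_filter.1 hq).2
    simp [Finset.mem_filter, this, q.2]
  · intro p hp; rfl
  · intro q hq; rfl
  · intro p hp
    simp [(Finset.mem_filter.1 hp).2]

lemma laminar_fib {α : Type} [DecidableEq α] (Mset : Finset (Finset α))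
    (hlam : ∀ X ∈ Mset, ∀ Y ∈ Mset, X ⊆ Y ∨ Y ⊆ X ∨ Disjoint X Y) :
    ∃ fib : Finset α → Finset α,
      (∀ X ∈ Mset, fib X ⊆ X) ∧
      (∀ X ∈ Mset, ∀ Y ∈ Mset, X ≠ Y → Disjoint (fib X) (fib Y)) ∧
      (∀ Y ∈ Mset, (Mset.filter (fun X => X ⊆ Y)).biUnion fib = Y) := by
  classical
  have hex : ∀ p : α, ∃ X : Finset α,
      ((Mset.filter (fun X => p ∈ X)).Nonempty →
        X ∈ Mset ∧ p ∈ X ∧ ∀ Y ∈ Mset, p ∈ Y → X ⊆ Y) := by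
    intro p
    by_cases h : (Mset.filter (fun X => p ∈ X)).Nonempty
    · obtain ⟨X, hX, hmin⟩ := Finset.exists_min_image _ Finset.card h
      rw [Finset.mem_filter] at hX
      refine ⟨X, fun _ => ⟨hX.1, hX.2, ?_⟩⟩
      intro Y hY hpY
      rcases hlam X hX.1 Y hY with h1 | h1 | h1
      · exact h1
      · have hc := hmin Y (Finset.mem_filter.2 ⟨hY, hpY⟩)
        have := Finset.eq_of_subset_of_card_le h1 hc
        rw [this]
      · exact (Finset.disjoint_left.1 h1 hX.2 hpY).elim
    · exact ⟨∅, fun hn => absurd hn h⟩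
  choose B hB using hex
  refine ⟨fun X => X.filter (fun p => B p = X), ?_, ?_, ?_⟩
  · intro X hX; exact Finset.filter_subset _ _
  · intro X hX Y hY hne
    rw [Finset.disjoint_left]
    intro p hp hq
    rw [Finset.mem_filter] at hp hq
    exact hne (hp.2 ▸ hq.2)
  · intro Y hY
    ext p
    simp only [Finset.mem_biUnion, Finset.mem_filter]
    constructor
    · rintro ⟨X, ⟨hXM, hXY⟩, hpX, -⟩
      exact hXY hpX
    · intro hpY
      have hne : (Mset.filter (fun X => p ∈ X)).Nonempty :=
        ⟨Y, Finset.mem_filter.2 ⟨hY, hpY⟩⟩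
      obtain ⟨hBM, hpB, hmin⟩ := hB p hne
      exact ⟨B p, ⟨hBM, hmin Y hY hpY⟩, hpB, rfl⟩


open scoped Classical in
noncomputable def fracSet {N S : Type} [Fintype N] [Fintype S] (y : N → S → ℝ) :
    Finset (N × S) :=
  Finset.univ.filter (fun p => ¬∃ k : ℤ, y p.1 p.2 = (k : ℝ))

open scoped Classical in
noncomputable def fracJ {N S J : Type} [Fintype N] [Fintype S] [Fintype J]
    (E : J → Finset (N × S)) (y : N → S → ℝ) : Finset J :=
  Finset.univ.filter (fun j => ¬∃ k : ℤ, ∑ p ∈ E j, y p.1 p.2 = (k : ℝ))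

noncomputable def meas {N S J : Type} [Fintype N] [Fintype S] [Fintype J]
    (E : J → Finset (N × S)) (y : N → S → ℝ) : ℕ :=
  (fracSet y).card * (Fintype.card J + 1) + (fracJ E y).card

lemma base {N S J : Type} [Fintype N] [Fintype S] [Fintype J]
    [DecidableEq N] [DecidableEq S]
    (E : J → Finset (N × S)) (L U : J → ℤ)
    (y : N → S → ℝ)
    (hnn : ∀ i s, 0 ≤ y i s) (hrow : ∀ i, ∑ s, y i s = 1)
    (hcon : ∀ j, (L j : ℝ) ≤ ∑ p ∈ E j, y p.1 p.2 ∧ ∑ p ∈ E j, y p.1 p.2 ≤ U j)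
    (hFr : fracSet y = ∅) :
    ∃ a : N → S, ∀ j,
      (L j : ℝ) ≤ ∑ p ∈ E j, (if a p.1 = p.2 then (1:ℝ) else 0) ∧
      ∑ p ∈ E j, (if a p.1 = p.2 then (1:ℝ) else 0) ≤ U j := by
  classical
  have hint : ∀ i s, ∃ k : ℤ, y i s = (k : ℝ) := by
    intro i s
    by_contra h
    have : (i, s) ∈ fracSet y := by
      rw [fracSet, Finset.mem_filter]
      exact ⟨Finset.mem_univ _, h⟩
    rw [hFr] at this
    exact absurd this (Finset.notMem_empty _)
  have hub : ∀ i s, y i s ≤ 1 := by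
    intro i s
    rw [← hrow i]
    exact Finset.single_le_sum (fun s _ => hnn i s) (Finset.mem_univ s)
  have h01 : ∀ i s, y i s = 0 ∨ y i s = 1 := by
    intro i s
    obtain ⟨k, hk⟩ := hint i s
    have h0 := hnn i s
    have h1 := hub i s
    rw [hk] at h0 h1 ⊢
    have : k = 0 ∨ k = 1 := by
      have : (0:ℝ) ≤ k := h0
      have : (k:ℝ) ≤ 1 := h1
      have hk0 : (0:ℤ) ≤ k := by exact_mod_cast h0
      have hk1 : k ≤ 1 := by exact_mod_cast h1
      omega
    rcases this with h | h <;> simp [h]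
  have hex : ∀ i, ∃ s, y i s = 1 := by
    intro i
    by_contra h
    push_neg at h
    have hz : ∀ s, y i s = 0 := by
      intro s
      rcases h01 i s with h' | h'
      · exact h'
      · exact absurd h' (h s)
    have hr := hrow i
    rw [Finset.sum_congr rfl (fun s _ => hz s)] at hr
    simp at hr
  choose a ha using hex
  have hpt : ∀ (i : N) (s : S), y i s = if a i = s then (1:ℝ) else 0 := by
    intro i s
    by_cases h : a i = s
    · rw [if_pos h, ← h, ha i]
    · rw [if_neg h]
      rcases h01 i s with h' | h'
      · exact h'
      · exfalso
        have hsum := hrow i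
        have h2 : y i (a i) + y i s ≤ ∑ t, y i t := by
          rw [← Finset.add_sum_erase _ _ (Finset.mem_univ (a i))]
          have : y i s ≤ ∑ t ∈ Finset.univ.erase (a i), y i t :=
            Finset.single_le_sum (fun t _ => hnn i t)
              (Finset.mem_erase.2 ⟨fun hh => h hh.symm, Finset.mem_univ s⟩)
          linarith
        rw [hsum, ha i, h'] at h2
        linarith
  refine ⟨a, fun j => ?_⟩
  have : ∑ p ∈ E j, (if a p.1 = p.2 then (1:ℝ) else 0) = ∑ p ∈ E j, y p.1 p.2 :=
    Finset.sum_congr rfl (fun p _ => (hpt p.1 p.2).symm)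
  rw [this]
  exact hcon j

lemma exists_dir {N S J : Type} [Fintype N] [Fintype S] [Fintype J]
    [DecidableEq N] [DecidableEq S]
    (E : J → Finset (N × S))
    (hlam : ∀ j j', E j ⊆ E j' ∨ E j' ⊆ E j ∨ Disjoint (E j) (E j'))
    (y : N → S → ℝ)
    (hnn : ∀ i s, 0 ≤ y i s) (hrow : ∀ i, ∑ s, y i s = 1)
    (hne : (fracSet y).Nonempty) :
    ∃ d : N × S → ℝ, d ≠ 0 ∧ (∀ p, p ∉ fracSet y → d p = 0) ∧
      (∀ i, ∑ s, d (i, s) = 0) ∧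
      (∀ j, (∃ k : ℤ, ∑ p ∈ E j, y p.1 p.2 = (k : ℝ)) → ∑ p ∈ E j, d p = 0) := by
  classical
  set Fr := fracSet y with hFrdef
  have hmemFr : ∀ p : N × S, p ∈ Fr ↔ ¬∃ k : ℤ, y p.1 p.2 = (k : ℝ) := by
    intro p; simp [hFrdef, fracSet]
  have hub : ∀ i s, y i s ≤ 1 := by
    intro i s
    rw [← hrow i]
    exact Finset.single_le_sum (fun s _ => hnn i s) (Finset.mem_univ s)
  have hfr01 : ∀ p ∈ Fr, 0 < y p.1 p.2 ∧ y p.1 p.2 < 1 := by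
    intro p hp
    rw [hmemFr] at hp
    constructor
    · rcases lt_or_eq_of_le (hnn p.1 p.2) with h | h
      · exact h
      · exact absurd ⟨0, by simp [← h]⟩ hp
    · rcases lt_or_eq_of_le (hub p.1 p.2) with h | h
      · exact h
      · exact absurd ⟨1, by simp [h]⟩ hp
  have hcard2 : ∀ T : Finset (N × S), T ⊆ Fr →
      (∃ k : ℤ, ∑ p ∈ T, y p.1 p.2 = (k : ℝ)) → T.Nonempty → 2 ≤ T.card := by
    intro T hTF ⟨k, hk⟩ hTne
    by_contra h
    push_neg at h
    interval_cases hc : T.card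
    · rw [Finset.card_eq_zero] at hc; rw [hc] at hTne; exact absurd hTne (by simp)
    · obtain ⟨p, hp⟩ := Finset.card_eq_one.1 hc
      rw [hp, Finset.sum_singleton] at hk
      have hpF : p ∈ Fr := hTF (by rw [hp]; exact Finset.mem_singleton_self p)
      rw [hmemFr] at hpF
      exact hpF ⟨k, hk⟩
  -- entries outside Fr are integral
  have hoff : ∀ T : Finset (N × S), (∀ p ∈ T, p ∉ Fr) →
      ∃ k : ℤ, ∑ p ∈ T, y p.1 p.2 = (k : ℝ) := by
    intro T hT
    refine intSum T _ (fun p hp => ?_)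
    have := hT p hp
    rw [hmemFr, not_not] at this
    exact this
  -- the laminar family of fractional parts of integral constraints
  set c : J → ℝ := fun j => ∑ p ∈ E j, y p.1 p.2 with hcdef
  set Mset : Finset (Finset (N × S)) :=
    (Finset.univ.filter (fun j => (∃ k : ℤ, c j = (k : ℝ)) ∧ (E j ∩ Fr).Nonempty)).image
      (fun j => E j ∩ Fr) with hMdef
  have hMelt : ∀ X ∈ Mset, ∃ j, (∃ k : ℤ, c j = (k : ℝ)) ∧ (E j ∩ Fr).Nonempty ∧
      X = E j ∩ Fr := by
    intro X hX
    rw [hMdef, Finset.mem_image] at hX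
    obtain ⟨j, hj, hXj⟩ := hX
    rw [Finset.mem_filter] at hj
    exact ⟨j, hj.2.1, hj.2.2, hXj.symm⟩
  have hMsub : ∀ X ∈ Mset, X ⊆ Fr := by
    intro X hX
    obtain ⟨j, -, -, hXj⟩ := hMelt X hX
    rw [hXj]
    exact Finset.inter_subset_right
  have hMint : ∀ X ∈ Mset, ∃ k : ℤ, ∑ p ∈ X, y p.1 p.2 = (k : ℝ) := by
    intro X hX
    obtain ⟨j, ⟨k, hk⟩, -, hXj⟩ := hMelt X hX
    obtain ⟨k', hk'⟩ := hoff (E j \ (E j ∩ Fr)) (by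
      intro p hp
      rw [Finset.mem_sdiff] at hp
      intro hpF
      exact hp.2 (Finset.mem_inter.2 ⟨hp.1, hpF⟩))
    have hsplit : ∑ p ∈ E j \ (E j ∩ Fr), y p.1 p.2 + ∑ p ∈ E j ∩ Fr, y p.1 p.2
        = ∑ p ∈ E j, y p.1 p.2 :=
      Finset.sum_sdiff Finset.inter_subset_left
    refine ⟨k - k', ?_⟩
    rw [hXj]
    have : c j = ∑ p ∈ E j, y p.1 p.2 := rfl
    push_cast
    linarith [hk, hk', hsplit]
  have hMlam : ∀ X ∈ Mset, ∀ Y ∈ Mset, X ⊆ Y ∨ Y ⊆ X ∨ Disjoint X Y := by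
    intro X hX Y hY
    obtain ⟨j, -, -, hXj⟩ := hMelt X hX
    obtain ⟨j', -, -, hYj⟩ := hMelt Y hY
    rw [hXj, hYj]
    rcases hlam j j' with h | h | h
    · exact Or.inl (Finset.inter_subset_inter h (le_refl _))
    · exact Or.inr (Or.inl (Finset.inter_subset_inter h (le_refl _)))
    · exact Or.inr (Or.inr (Finset.disjoint_left.2
        (fun p hp hq => Finset.disjoint_left.1 h (Finset.mem_inter.1 hp).1
          (Finset.mem_inter.1 hq).1)))
  obtain ⟨fib, hfibsub, hfibdisj, hfibpart⟩ := laminar_fib Mset hMlam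
  -- fiber sums are integral (strong induction on card)
  have hfibint : ∀ n : ℕ, ∀ X ∈ Mset, X.card ≤ n →
      ∃ k : ℤ, ∑ p ∈ fib X, y p.1 p.2 = (k : ℝ) := by
    intro n
    induction n with
    | zero =>
      intro X hX hc
      have : X = ∅ := Finset.card_eq_zero.1 (Nat.le_zero.1 hc)
      have h2 : fib X ⊆ (∅ : Finset (N × S)) := this ▸ hfibsub X hX
      rw [Finset.subset_empty] at h2
      exact ⟨0, by rw [h2]; simp⟩
    | succ n ih =>
      intro X hX hc
      have hdisj : Set.PairwiseDisjoint ((Mset.filter (fun X' => X' ⊆ X)) : Set (Finset (N × S))) fib := by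
        intro A hA B hB hAB
        simp only [Finset.coe_filter, Set.mem_setOf_eq] at hA hB
        exact hfibdisj A hA.1 B hB.1 hAB
      have hsplit : ∑ X' ∈ Mset.filter (fun X' => X' ⊆ X), ∑ p ∈ fib X', y p.1 p.2
          = ∑ p ∈ X, y p.1 p.2 := by
        rw [← Finset.sum_biUnion hdisj, hfibpart X hX]
      have hXmem : X ∈ Mset.filter (fun X' => X' ⊆ X) :=
        Finset.mem_filter.2 ⟨hX, Finset.Subset.refl X⟩
      have hrest : ∃ k : ℤ, ∑ X' ∈ (Mset.filter (fun X' => X' ⊆ X)).erase X,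
          ∑ p ∈ fib X', y p.1 p.2 = (k : ℝ) := by
        refine intSum _ _ (fun X' hX' => ?_)
        rw [Finset.mem_erase, Finset.mem_filter] at hX'
        have hlt : X'.card < X.card :=
          Finset.card_lt_card (HasSubset.Subset.ssubset_of_ne hX'.2.2 hX'.1)
        exact ih X' hX'.2.1 (by omega)
      obtain ⟨k1, hk1⟩ := hMint X hX
      obtain ⟨k2, hk2⟩ := hrest
      refine ⟨k1 - k2, ?_⟩
      have := Finset.add_sum_erase (Mset.filter (fun X' => X' ⊆ X)) (fun X' => ∑ p ∈ fib X', y p.1 p.2) hXmem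
      rw [← this] at hsplit
      push_cast
      linarith [hk1, hk2, hsplit]
  -- rows
  set R : N → Finset (N × S) := fun i => Fr.filter (fun p => p.1 = i) with hRdef
  set RowIdx : Finset N := Finset.univ.filter (fun i => (R i).Nonempty) with hRIdef
  have hRsub : ∀ i, R i ⊆ Fr := fun i => Finset.filter_subset _ _
  have hRint : ∀ i, ∃ k : ℤ, ∑ p ∈ R i, y p.1 p.2 = (k : ℝ) := by
    intro i
    have hsub : R i ⊆ ({i} ×ˢ Finset.univ) := by
      intro p hp
      rw [hRdef, Finset.mem_filter] at hp
      rw [Finset.mem_product, Finset.mem_singleton]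
      exact ⟨hp.2, Finset.mem_univ _⟩
    obtain ⟨k, hk⟩ := hoff (({i} ×ˢ Finset.univ) \ R i) (by
      intro p hp
      rw [Finset.mem_sdiff, Finset.mem_product, Finset.mem_singleton] at hp
      intro hpF
      exact hp.2 (Finset.mem_filter.2 ⟨hpF, hp.1.1⟩))
    have hsplit := Finset.sum_sdiff (f := fun p : N × S => y p.1 p.2) hsub
    have htot : ∑ p ∈ ({i} ×ˢ Finset.univ), y p.1 p.2 = 1 := by
      rw [Finset.sum_product, Finset.sum_singleton]
      exact hrow i
    exact ⟨1 - k, by push_cast; linarith [hk, hsplit, htot]⟩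
  have hRcard : ∀ i ∈ RowIdx, 2 ≤ (R i).card := by
    intro i hi
    rw [hRIdef, Finset.mem_filter] at hi
    exact hcard2 (R i) (hRsub i) (hRint i) hi.2
  have hRdisj : ∀ i ∈ RowIdx, ∀ i' ∈ RowIdx, i ≠ i' → Disjoint (R i) (R i') := by
    intro i _ i' _ hne'
    rw [Finset.disjoint_left]
    intro p hp hq
    rw [hRdef, Finset.mem_filter] at hp hq
    exact hne' (hp.2 ▸ hq.2 ▸ rfl)
  have hRunion : RowIdx.biUnion R = Fr := by
    ext p
    simp only [Finset.mem_biUnion]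
    constructor
    · rintro ⟨i, -, hp⟩; exact (hRsub i) hp
    · intro hp
      exact ⟨p.1, Finset.mem_filter.2 ⟨Finset.mem_univ _,
        ⟨p, Finset.mem_filter.2 ⟨hp, rfl⟩⟩⟩, Finset.mem_filter.2 ⟨hp, rfl⟩⟩
  have hRowcount : 2 * RowIdx.card ≤ Fr.card := by
    have h1 : (RowIdx.biUnion R).card = ∑ i ∈ RowIdx, (R i).card :=
      Finset.card_biUnion hRdisj
    rw [hRunion] at h1
    have h2 : ∑ i ∈ RowIdx, 2 ≤ ∑ i ∈ RowIdx, (R i).card :=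
      Finset.sum_le_sum (fun i hi => hRcard i hi)
    rw [Finset.sum_const, smul_eq_mul] at h2
    omega
  -- fibers with content
  set K : Finset (Finset (N × S)) := Mset.filter (fun X => (fib X).Nonempty) with hKdef
  have hKsub : ∀ X ∈ K, X ∈ Mset := fun X hX => (Finset.mem_filter.1 hX).1
  have hKcard2 : ∀ X ∈ K, 2 ≤ (fib X).card := by
    intro X hX
    have hXM := hKsub X hX
    exact hcard2 (fib X) ((hfibsub X hXM).trans (hMsub X hXM))
      (hfibint X.card X hXM (le_refl _)) (Finset.mem_filter.1 hX).2
  have hKdisj : ∀ X ∈ K, ∀ X' ∈ K, X ≠ X' → Disjoint (fib X) (fib X') :=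
    fun X hX X' hX' h => hfibdisj X (hKsub X hX) X' (hKsub X' hX') h
  set C : Finset (N × S) := K.biUnion fib with hCdef
  have hCsub : C ⊆ Fr := by
    intro p hp
    rw [hCdef, Finset.mem_biUnion] at hp
    obtain ⟨X, hX, hpX⟩ := hp
    exact hMsub X (hKsub X hX) (hfibsub X (hKsub X hX) hpX)
  have hKcount : 2 * K.card ≤ C.card := by
    have h1 : C.card = ∑ X ∈ K, (fib X).card := Finset.card_biUnion hKdisj
    have h2 : ∑ X ∈ K, 2 ≤ ∑ X ∈ K, (fib X).card :=
      Finset.sum_le_sum (fun X hX => hKcard2 X hX)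
    rw [Finset.sum_const, smul_eq_mul] at h2
    omega
  -- build the kernel vector
  set toSub : Finset (N × S) → Finset {p // p ∈ Fr} :=
    fun T => Finset.univ.filter (fun q : {p // p ∈ Fr} => ↑q ∈ T) with htoSubdef
  have hcardsub : Fintype.card {p // p ∈ Fr} = Fr.card := Fintype.card_coe Fr
  -- key step: get d vanishing on rows and all fibers
  have hkey : ∃ d : N × S → ℝ, d ≠ 0 ∧ (∀ p, p ∉ Fr → d p = 0) ∧
      (∀ i, ∑ p ∈ R i, d p = 0) ∧ (∀ X ∈ Mset, ∑ p ∈ fib X, d p = 0) := by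
    have hRowPD : Set.PairwiseDisjoint (RowIdx : Set N) R := by
      intro a ha b hb hab
      exact hRdisj a ha b hb hab
    have hKPD : Set.PairwiseDisjoint (K : Set (Finset (N × S))) fib := by
      intro a ha b hb hab
      exact hKdisj a ha b hb hab
    by_cases hcase : C = Fr
    · -- fibers cover: drop one fiber, recover it from the row relations
      have hKne : K.Nonempty := by
        obtain ⟨p0, hp0⟩ := hne
        have hp0' : p0 ∈ C := by rw [hcase]; exact hp0
        rw [hCdef, Finset.mem_biUnion] at hp0'
        obtain ⟨X, hX, -⟩ := hp0'
        exact ⟨X, hX⟩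
      obtain ⟨X₀, hX₀⟩ := hKne
      set G : Finset (Finset {p // p ∈ Fr}) :=
        (RowIdx.image (fun i => toSub (R i))) ∪
          ((K.erase X₀).image (fun X => toSub (fib X))) with hGdef
      have hGcard : G.card < Fintype.card {p // p ∈ Fr} := by
        rw [hcardsub]
        have h1 : G.card ≤ RowIdx.card + (K.erase X₀).card := by
          refine le_trans (Finset.card_union_le _ _) ?_
          exact Nat.add_le_add (Finset.card_image_le) (Finset.card_image_le)
        rw [Finset.card_erase_of_mem hX₀] at h1
        have h2 : 1 ≤ K.card := Finset.card_pos.2 ⟨X₀, hX₀⟩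
        have h3 : C.card = Fr.card := by rw [hcase]
        omega
      obtain ⟨d₀, hd₀ne, hd₀⟩ := exists_ker G hGcard
      set d : N × S → ℝ := fun p => if h : p ∈ Fr then d₀ ⟨p, h⟩ else 0 with hddef
      have hdsum : ∀ T : Finset (N × S), ∑ p ∈ T, d p = ∑ q ∈ toSub T, d₀ q :=
        fun T => sum_ext Fr T d₀
      have hdsupp : ∀ p, p ∉ Fr → d p = 0 := by
        intro p hp; rw [hddef]; exact dif_neg hp
      have hdne : d ≠ 0 := by
        intro h0
        apply hd₀ne
        funext q
        have := congrFun h0 ↑q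
        rw [hddef] at this
        simpa [q.2] using this
      have hdrow : ∀ i, ∑ p ∈ R i, d p = 0 := by
        intro i
        by_cases hi : i ∈ RowIdx
        · rw [hdsum]
          exact hd₀ _ (Finset.mem_union_left _ (Finset.mem_image.2 ⟨i, hi, rfl⟩))
        · have : R i = ∅ := by
            rw [hRIdef, Finset.mem_filter] at hi
            push_neg at hi
            exact hi (Finset.mem_univ i)
          rw [this]; simp
      refine ⟨d, hdne, hdsupp, hdrow, ?_⟩
      intro X hXM
      by_cases hXK : X ∈ K
      · by_cases hXX₀ : X = X₀
        · -- recover the dropped fiber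
          have hFrsum : ∑ p ∈ Fr, d p = 0 := by
            rw [← hRunion, Finset.sum_biUnion hRowPD]
            exact Finset.sum_eq_zero (fun i _ => hdrow i)
          have hFrsum2 : ∑ p ∈ Fr, d p = ∑ X' ∈ K, ∑ p ∈ fib X', d p := by
            rw [← hcase, hCdef]
            exact Finset.sum_biUnion hKPD
          have herase : ∑ X' ∈ K.erase X₀, ∑ p ∈ fib X', d p = 0 := by
            refine Finset.sum_eq_zero (fun X' hX' => ?_)
            rw [hdsum]
            exact hd₀ _ (Finset.mem_union_right _ (Finset.mem_image.2 ⟨X', hX', rfl⟩))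
          have := Finset.add_sum_erase K (fun X' => ∑ p ∈ fib X', d p) hX₀
          rw [hXX₀]
          rw [herase] at this
          rw [← hFrsum2, hFrsum] at this
          simpa using this
        · rw [hdsum]
          exact hd₀ _ (Finset.mem_union_right _
            (Finset.mem_image.2 ⟨X, Finset.mem_erase.2 ⟨hXX₀, hXK⟩, rfl⟩))
      · have : fib X = ∅ := by
          rw [hKdef] at hXK
          by_contra hne'
          exact hXK (Finset.mem_filter.2 ⟨hXM, Finset.nonempty_iff_ne_empty.2 hne'⟩)
        rw [this]; simp
    · -- fibers do not cover: no need to drop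
      have hClt : C.card < Fr.card :=
        Finset.card_lt_card (HasSubset.Subset.ssubset_of_ne hCsub hcase)
      set G : Finset (Finset {p // p ∈ Fr}) :=
        (RowIdx.image (fun i => toSub (R i))) ∪
          (K.image (fun X => toSub (fib X))) with hGdef
      have hGcard : G.card < Fintype.card {p // p ∈ Fr} := by
        rw [hcardsub]
        have h1 : G.card ≤ RowIdx.card + K.card := by
          refine le_trans (Finset.card_union_le _ _) ?_
          exact Nat.add_le_add (Finset.card_image_le) (Finset.card_image_le)
        omega
      obtain ⟨d₀, hd₀ne, hd₀⟩ := exists_ker G hGcard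
      set d : N × S → ℝ := fun p => if h : p ∈ Fr then d₀ ⟨p, h⟩ else 0 with hddef
      have hdsum : ∀ T : Finset (N × S), ∑ p ∈ T, d p = ∑ q ∈ toSub T, d₀ q :=
        fun T => sum_ext Fr T d₀
      have hdsupp : ∀ p, p ∉ Fr → d p = 0 := by
        intro p hp; rw [hddef]; exact dif_neg hp
      have hdne : d ≠ 0 := by
        intro h0
        apply hd₀ne
        funext q
        have := congrFun h0 ↑q
        rw [hddef] at this
        simpa [q.2] using this
      have hdrow : ∀ i, ∑ p ∈ R i, d p = 0 := by
        intro i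
        by_cases hi : i ∈ RowIdx
        · rw [hdsum]
          exact hd₀ _ (Finset.mem_union_left _ (Finset.mem_image.2 ⟨i, hi, rfl⟩))
        · have : R i = ∅ := by
            rw [hRIdef, Finset.mem_filter] at hi
            push_neg at hi
            exact hi (Finset.mem_univ i)
          rw [this]; simp
      refine ⟨d, hdne, hdsupp, hdrow, ?_⟩
      intro X hXM
      by_cases hXK : X ∈ K
      · rw [hdsum]
        exact hd₀ _ (Finset.mem_union_right _ (Finset.mem_image.2 ⟨X, hXK, rfl⟩))
      · have : fib X = ∅ := by
          rw [hKdef] at hXK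
          by_contra hne'
          exact hXK (Finset.mem_filter.2 ⟨hXM, Finset.nonempty_iff_ne_empty.2 hne'⟩)
        rw [this]; simp
  obtain ⟨d, hdne, hdsupp, hdrow, hdfib⟩ := hkey
  refine ⟨d, hdne, hdsupp, ?_, ?_⟩
  · intro i
    have hsub : R i ⊆ ({i} ×ˢ Finset.univ) := by
      intro p hp
      rw [hRdef, Finset.mem_filter] at hp
      rw [Finset.mem_product, Finset.mem_singleton]
      exact ⟨hp.2, Finset.mem_univ _⟩
    have hz : ∑ p ∈ ({i} ×ˢ Finset.univ) \ R i, d p = 0 := by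
      refine Finset.sum_eq_zero (fun p hp => ?_)
      rw [Finset.mem_sdiff, Finset.mem_product, Finset.mem_singleton] at hp
      refine hdsupp p (fun hpF => hp.2 (Finset.mem_filter.2 ⟨hpF, hp.1.1⟩))
    have hsplit := Finset.sum_sdiff (f := d) hsub
    have htot : ∑ p ∈ ({i} ×ˢ Finset.univ), d p = ∑ s, d (i, s) := by
      rw [Finset.sum_product, Finset.sum_singleton]
    rw [← htot, ← hsplit, hz, hdrow i, add_zero]
  · intro j hj
    by_cases hEj : (E j ∩ Fr).Nonempty
    · have hXM : E j ∩ Fr ∈ Mset := by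
        rw [hMdef, Finset.mem_image]
        exact ⟨j, Finset.mem_filter.2 ⟨Finset.mem_univ _, ⟨hj, hEj⟩⟩, rfl⟩
      have hz : ∑ p ∈ E j \ (E j ∩ Fr), d p = 0 := by
        refine Finset.sum_eq_zero (fun p hp => ?_)
        rw [Finset.mem_sdiff] at hp
        exact hdsupp p (fun hpF => hp.2 (Finset.mem_inter.2 ⟨hp.1, hpF⟩))
      have hsplit := Finset.sum_sdiff (f := d) (Finset.inter_subset_left : E j ∩ Fr ⊆ E j)
      have hdisj : Set.PairwiseDisjoint
          ((Mset.filter (fun X' => X' ⊆ E j ∩ Fr)) : Set (Finset (N × S))) fib := by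
        intro A hA B hB hAB
        simp only [Finset.coe_filter, Set.mem_setOf_eq] at hA hB
        exact hfibdisj A hA.1 B hB.1 hAB
      have hz2 : ∑ p ∈ E j ∩ Fr, d p = 0 := by
        rw [← hfibpart (E j ∩ Fr) hXM, Finset.sum_biUnion hdisj]
        exact Finset.sum_eq_zero (fun X' hX' => hdfib X' (Finset.mem_filter.1 hX').1)
      rw [← hsplit, hz, hz2, add_zero]
    · refine Finset.sum_eq_zero (fun p hp => ?_)
      refine hdsupp p (fun hpF => hEj ⟨p, Finset.mem_inter.2 ⟨hp, hpF⟩⟩)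

lemma step {N S J : Type} [Fintype N] [Fintype S] [Fintype J]
    [DecidableEq N] [DecidableEq S]
    (E : J → Finset (N × S)) (L U : J → ℤ)
    (hlam : ∀ j j', E j ⊆ E j' ∨ E j' ⊆ E j ∨ Disjoint (E j) (E j'))
    (y : N → S → ℝ)
    (hnn : ∀ i s, 0 ≤ y i s) (hrow : ∀ i, ∑ s, y i s = 1)
    (hcon : ∀ j, (L j : ℝ) ≤ ∑ p ∈ E j, y p.1 p.2 ∧ ∑ p ∈ E j, y p.1 p.2 ≤ U j)
    (hne : (fracSet y).Nonempty) :
    ∃ y' : N → S → ℝ, (∀ i s, 0 ≤ y' i s) ∧ (∀ i, ∑ s, y' i s = 1) ∧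
      (∀ j, (L j : ℝ) ≤ ∑ p ∈ E j, y' p.1 p.2 ∧ ∑ p ∈ E j, y' p.1 p.2 ≤ U j) ∧
      meas E y' < meas E y := by
  classical
  obtain ⟨d, hdne, hdsupp, hdrow, hdcon⟩ := exists_dir E hlam y hnn hrow hne
  have hub : ∀ i s, y i s ≤ 1 := by
    intro i s
    rw [← hrow i]
    exact Finset.single_le_sum (fun s _ => hnn i s) (Finset.mem_univ s)
  have hmemFr : ∀ p : N × S, p ∈ fracSet y ↔ ¬∃ k : ℤ, y p.1 p.2 = (k : ℝ) := by
    intro p; simp [fracSet]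
  have hfr01 : ∀ p ∈ fracSet y, 0 < y p.1 p.2 ∧ y p.1 p.2 < 1 := by
    intro p hp
    rw [hmemFr] at hp
    constructor
    · rcases lt_or_eq_of_le (hnn p.1 p.2) with h | h
      · exact h
      · exact absurd ⟨0, by simp [← h]⟩ hp
    · rcases lt_or_eq_of_le (hub p.1 p.2) with h | h
      · exact h
      · exact absurd ⟨1, by simp [h]⟩ hp
  set c : J → ℝ := fun j => ∑ p ∈ E j, y p.1 p.2 with hcdef
  set δ : J → ℝ := fun j => ∑ p ∈ E j, d p with hδdef
  have hsupp' : ∀ p : N × S, d p ≠ 0 → p ∈ fracSet y := by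
    intro p hp
    by_contra h
    exact hp (hdsupp p h)
  set P1 : Finset (N × S) := Finset.univ.filter (fun p => d p ≠ 0) with hP1def
  set ratio : N × S → ℝ :=
    fun p => if 0 < d p then (1 - y p.1 p.2) / d p else y p.1 p.2 / (-d p) with hratiodef
  set P2 : Finset J :=
    Finset.univ.filter (fun j => (¬∃ k : ℤ, c j = (k : ℝ)) ∧ δ j ≠ 0) with hP2def
  set ratio2 : J → ℝ :=
    fun j => if 0 < δ j then ((U j : ℝ) - c j) / δ j else (c j - (L j : ℝ)) / (-δ j) with hr2def
  have hstrict : ∀ j, (¬∃ k : ℤ, c j = (k : ℝ)) → (L j : ℝ) < c j ∧ c j < U j := by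
    intro j hj
    refine ⟨lt_of_le_of_ne (hcon j).1 ?_, lt_of_le_of_ne (hcon j).2 ?_⟩
    · intro h; exact hj ⟨L j, h.symm⟩
    · intro h; exact hj ⟨U j, h⟩
  set Cand := P1.image ratio ∪ P2.image ratio2 with hCanddef
  have hP1ne : P1.Nonempty := by
    rw [Function.ne_iff] at hdne
    obtain ⟨p, hp⟩ := hdne
    exact ⟨p, Finset.mem_filter.2 ⟨Finset.mem_univ _, hp⟩⟩
  have hCne : Cand.Nonempty := by
    obtain ⟨p, hp⟩ := hP1ne
    exact ⟨ratio p, Finset.mem_union_left _ (Finset.mem_image_of_mem ratio hp)⟩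
  set ε := Cand.min' hCne with hεdef
  have hεle : ∀ x ∈ Cand, ε ≤ x := fun x hx => Finset.min'_le _ x hx
  have hratio_pos : ∀ p ∈ P1, 0 < ratio p := by
    intro p hp
    rw [hP1def, Finset.mem_filter] at hp
    have h01 := hfr01 p (hsupp' p hp.2)
    simp only [hratiodef]
    by_cases h : 0 < d p
    · rw [if_pos h]; exact div_pos (by linarith [h01.2]) h
    · rw [if_neg h]
      have hlt : d p < 0 := lt_of_le_of_ne (not_lt.1 h) hp.2
      exact div_pos h01.1 (by linarith)
  have hratio2_pos : ∀ j ∈ P2, 0 < ratio2 j := by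
    intro j hj
    rw [hP2def, Finset.mem_filter] at hj
    have hs := hstrict j hj.2.1
    simp only [hr2def]
    by_cases h : 0 < δ j
    · rw [if_pos h]; exact div_pos (by linarith [hs.2]) h
    · rw [if_neg h]
      have hlt : δ j < 0 := lt_of_le_of_ne (not_lt.1 h) hj.2.2
      exact div_pos (by linarith [hs.1]) (by linarith)
  have hεpos : 0 < ε := by
    have hmem := Finset.min'_mem Cand hCne
    rw [← hεdef] at hmem
    rw [hCanddef, Finset.mem_union] at hmem
    rcases hmem with h | h
    · obtain ⟨p, hp, hpe⟩ := Finset.mem_image.1 h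
      rw [← hpe]; exact hratio_pos p hp
    · obtain ⟨j, hj, hje⟩ := Finset.mem_image.1 h
      rw [← hje]; exact hratio2_pos j hj
  set y' : N → S → ℝ := fun i s => y i s + ε * d (i, s) with hy'def
  have hsum' : ∀ j, ∑ p ∈ E j, y' p.1 p.2 = c j + ε * δ j := by
    intro j
    rw [hcdef, hδdef]
    simp only [hy'def, Prod.mk.eta]
    rw [Finset.sum_add_distrib, ← Finset.mul_sum]
  have hbound1 : ∀ p : N × S, 0 < d p → ε * d p ≤ 1 - y p.1 p.2 := by
    intro p hp
    have hP : p ∈ P1 := Finset.mem_filter.2 ⟨Finset.mem_univ _, ne_of_gt hp⟩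
    have := hεle (ratio p) (Finset.mem_union_left _ (Finset.mem_image_of_mem ratio hP))
    simp only [hratiodef] at this
    rw [if_pos hp] at this
    calc ε * d p ≤ ((1 - y p.1 p.2) / d p) * d p := by
          exact mul_le_mul_of_nonneg_right this (le_of_lt hp)
      _ = 1 - y p.1 p.2 := div_mul_cancel₀ _ (ne_of_gt hp)
  have hbound2 : ∀ p : N × S, d p < 0 → ε * (-d p) ≤ y p.1 p.2 := by
    intro p hp
    have hP : p ∈ P1 := Finset.mem_filter.2 ⟨Finset.mem_univ _, ne_of_lt hp⟩
    have := hεle (ratio p) (Finset.mem_union_left _ (Finset.mem_image_of_mem ratio hP))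
    simp only [hratiodef] at this
    rw [if_neg (not_lt.2 (le_of_lt hp))] at this
    calc ε * (-d p) ≤ (y p.1 p.2 / (-d p)) * (-d p) :=
          mul_le_mul_of_nonneg_right this (by linarith)
      _ = y p.1 p.2 := div_mul_cancel₀ _ (by intro h; exact (ne_of_lt hp) (by linarith [h]; ))
  have hnn' : ∀ i s, 0 ≤ y' i s := by
    intro i s
    show 0 ≤ y i s + ε * d (i, s)
    rcases lt_trichotomy (d (i, s)) 0 with h | h | h
    · have h1 := hbound2 (i, s) h
      have h2 : ε * -(d (i, s)) = -(ε * d (i, s)) := by ring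
      simp only at h1
      linarith
    · rw [h]; simpa using hnn i s
    · have h1 := mul_pos hεpos h
      have h2 := hnn i s
      linarith
  have hδzero : ∀ j, (∃ k : ℤ, c j = (k : ℝ)) → δ j = 0 := by
    intro j hj
    show ∑ p ∈ E j, d p = 0
    exact hdcon j hj
  have hrow' : ∀ i, ∑ s, y' i s = 1 := by
    intro i
    show ∑ s, (y i s + ε * d (i, s)) = 1
    rw [Finset.sum_add_distrib, ← Finset.mul_sum, hdrow i, hrow i]
    ring
  have hcon' : ∀ j, (L j : ℝ) ≤ ∑ p ∈ E j, y' p.1 p.2 ∧ ∑ p ∈ E j, y' p.1 p.2 ≤ U j := by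
    intro j
    rw [hsum']
    by_cases hcj : ∃ k : ℤ, c j = (k : ℝ)
    · rw [hδzero j hcj]
      have := hcon j
      constructor <;> [linarith [this.1]; linarith [this.2]]
    · have hs := hstrict j hcj
      by_cases hδj : δ j = 0
      · rw [hδj]
        constructor <;> [linarith [hs.1]; linarith [hs.2]]
      · have hjP : j ∈ P2 := Finset.mem_filter.2 ⟨Finset.mem_univ _, hcj, hδj⟩
        have hle := hεle (ratio2 j) (Finset.mem_union_right _ (Finset.mem_image_of_mem ratio2 hjP))
        simp only [hr2def] at hle
        rcases lt_trichotomy (δ j) 0 with h | h | h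
        · rw [if_neg (not_lt.2 (le_of_lt h))] at hle
          have h2 : ε * (-δ j) ≤ c j - (L j : ℝ) := by
            calc ε * (-δ j) ≤ ((c j - (L j : ℝ)) / (-δ j)) * (-δ j) :=
                  mul_le_mul_of_nonneg_right hle (by linarith)
              _ = c j - (L j : ℝ) := div_mul_cancel₀ _ (by intro hh; exact hδj (by linarith [hh]))
          have h3 : ε * δ j < 0 := mul_neg_of_pos_of_neg hεpos h
          constructor <;> nlinarith [hs.2]
        · exact absurd h hδj
        · rw [if_pos h] at hle
          have h2 : ε * δ j ≤ (U j : ℝ) - c j := by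
            calc ε * δ j ≤ (((U j : ℝ) - c j) / δ j) * δ j :=
                  mul_le_mul_of_nonneg_right hle (le_of_lt h)
              _ = (U j : ℝ) - c j := div_mul_cancel₀ _ (ne_of_gt h)
          have h3 : 0 < ε * δ j := mul_pos hεpos h
          constructor <;> nlinarith [hs.1]
  -- progress
  have hFr'sub : fracSet y' ⊆ fracSet y := by
    intro p hp
    by_contra h
    rw [hmemFr, not_not] at h
    obtain ⟨k, hk⟩ := h
    have hd0 : d p = 0 := hdsupp p (by rw [hmemFr, not_not]; exact ⟨k, hk⟩)
    have : p ∈ fracSet y' := hp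
    rw [fracSet, Finset.mem_filter] at this
    refine this.2 ⟨k, ?_⟩
    rw [hy'def]
    simp only [Prod.mk.eta]
    rw [hd0, hk]; ring
  have hfJ'sub : fracJ E y' ⊆ fracJ E y := by
    intro j hj
    by_contra h
    rw [fracJ, Finset.mem_filter] at h
    push_neg at h
    obtain ⟨k, hk⟩ := h (Finset.mem_univ j)
    rw [fracJ, Finset.mem_filter] at hj
    refine hj.2 ⟨k, ?_⟩
    rw [hsum', hδzero j ⟨k, hk⟩]
    have hck : c j = (k : ℝ) := hk
    rw [hck]; ring
  have hJbound : (fracJ E y).card ≤ Fintype.card J := Finset.card_le_univ _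
  have hprog : meas E y' < meas E y := by
    have hmem := Finset.min'_mem Cand hCne
    rw [← hεdef] at hmem
    rw [hCanddef, Finset.mem_union] at hmem
    have hcard1 : (fracSet y').card ≤ (fracSet y).card := Finset.card_le_card hFr'sub
    have hcard2 : (fracJ E y').card ≤ (fracJ E y).card := Finset.card_le_card hfJ'sub
    rcases hmem with h | h
    · -- an entry becomes integral
      obtain ⟨p, hpP1, hpe⟩ := Finset.mem_image.1 h
      have hdp : d p ≠ 0 := (Finset.mem_filter.1 hpP1).2
      have hpFr : p ∈ fracSet y := hsupp' p hdp
      have hint : ∃ k : ℤ, y' p.1 p.2 = (k : ℝ) := by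
        rw [hy'def]
        simp only [Prod.mk.eta]
        by_cases hd : 0 < d p
        · refine ⟨1, ?_⟩
          rw [← hpe]
          simp only [hratiodef, if_pos hd]
          rw [div_mul_cancel₀ _ (ne_of_gt hd)]
          ring
        · refine ⟨0, ?_⟩
          rw [← hpe]
          simp only [hratiodef, if_neg hd]
          rw [div_neg, neg_mul, div_mul_cancel₀ _ hdp]
          ring
      have hpnot : p ∉ fracSet y' := by
        intro hmem
        rw [fracSet, Finset.mem_filter] at hmem
        exact hmem.2 hint
      have hss : fracSet y' ⊂ fracSet y :=
        (Finset.ssubset_iff_of_subset hFr'sub).2 ⟨p, hpFr, hpnot⟩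
      have hlt := Finset.card_lt_card hss
      rw [meas, meas]
      have hm : (fracSet y').card * (Fintype.card J + 1) ≤
          ((fracSet y).card - 1) * (Fintype.card J + 1) :=
        Nat.mul_le_mul_right _ (by omega)
      have hJ' : (fracJ E y').card ≤ Fintype.card J := Finset.card_le_univ _
      have h1 : 1 ≤ (fracSet y).card := Finset.card_pos.2 ⟨p, hpFr⟩
      nlinarith [hm, hJ', h1]
    · -- a constraint becomes tight/integral
      obtain ⟨j, hjP2, hje⟩ := Finset.mem_image.1 h
      have hj2 := Finset.mem_filter.1 hjP2
      have hjFr : j ∈ fracJ E y := by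
        rw [fracJ, Finset.mem_filter]
        exact ⟨Finset.mem_univ _, hj2.2.1⟩
      have hδj : δ j ≠ 0 := hj2.2.2
      have hint : ∃ k : ℤ, ∑ p ∈ E j, y' p.1 p.2 = (k : ℝ) := by
        rw [hsum']
        by_cases hd : 0 < δ j
        · refine ⟨U j, ?_⟩
          rw [← hje]
          simp only [hr2def, if_pos hd]
          rw [div_mul_cancel₀ _ hδj]
          ring
        · refine ⟨L j, ?_⟩
          rw [← hje]
          simp only [hr2def, if_neg hd]
          rw [div_neg, neg_mul, div_mul_cancel₀ _ hδj]
          ring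
      have hjnot : j ∉ fracJ E y' := by
        intro hmem
        rw [fracJ, Finset.mem_filter] at hmem
        exact hmem.2 hint
      have hss : fracJ E y' ⊂ fracJ E y :=
        (Finset.ssubset_iff_of_subset hfJ'sub).2 ⟨j, hjFr, hjnot⟩
      have hlt := Finset.card_lt_card hss
      rw [meas, meas]
      have hm : (fracSet y').card * (Fintype.card J + 1) ≤
          (fracSet y).card * (Fintype.card J + 1) :=
        Nat.mul_le_mul_right _ hcard1
      omega
  exact ⟨y', hnn', hrow', hcon', hprog⟩

lemma main_ind {N S J : Type} [Fintype N] [Fintype S] [Fintype J]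
    [DecidableEq N] [DecidableEq S]
    (E : J → Finset (N × S)) (L U : J → ℤ)
    (hlam : ∀ j j', E j ⊆ E j' ∨ E j' ⊆ E j ∨ Disjoint (E j) (E j')) :
    ∀ n : ℕ, ∀ y : N → S → ℝ, (∀ i s, 0 ≤ y i s) → (∀ i, ∑ s, y i s = 1) →
    (∀ j, (L j : ℝ) ≤ ∑ p ∈ E j, y p.1 p.2 ∧ ∑ p ∈ E j, y p.1 p.2 ≤ U j) →
    meas E y ≤ n →
    ∃ a : N → S, ∀ j,
      (L j : ℝ) ≤ ∑ p ∈ E j, (if a p.1 = p.2 then (1:ℝ) else 0) ∧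
      ∑ p ∈ E j, (if a p.1 = p.2 then (1:ℝ) else 0) ≤ U j := by
  intro n
  induction n with
  | zero =>
    intro y hnn hrow hcon hm
    have hFr : fracSet y = ∅ := by
      rw [meas] at hm
      have h2 : (fracSet y).card * (Fintype.card J + 1) = 0 := by omega
      rcases Nat.mul_eq_zero.1 h2 with h3 | h3
      · exact Finset.card_eq_zero.1 h3
      · omega
    exact base E L U y hnn hrow hcon hFr
  | succ n ih =>
    intro y hnn hrow hcon hm
    by_cases hFr : fracSet y = ∅
    · exact base E L U y hnn hrow hcon hFr
    · obtain ⟨y', hnn', hrow', hcon', hlt⟩ :=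
        step E L U hlam y hnn hrow hcon (Finset.nonempty_iff_ne_empty.2 hFr)
      exact ih y' hnn' hrow' hcon' (by omega)

open Finset in
/-- **Laminar transportation polytopes have integral points.**  Consider variables
`y i s ≥ 0` (`i ∈ N`, `s ∈ S`) with unit row sums, together with integer lower/upper
bounds `L j ≤ ∑_{(i,s) ∈ E j} y i s ≤ U j` for a laminar family of constraint sets `E j`.
If this polytope is nonempty then it contains an integral point, i.e. a point given by an
assignment `a : N → S`. -/
theorem stmt4 {N S J : Type} [Fintype N] [Fintype S] [Fintype J]
    [DecidableEq N] [DecidableEq S]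
    (E : J → Finset (N × S)) (L U : J → ℤ)
    (hlam : ∀ j j', E j ⊆ E j' ∨ E j' ⊆ E j ∨ Disjoint (E j) (E j'))
    (y : N → S → ℝ)
    (hnn : ∀ i s, 0 ≤ y i s) (hrow : ∀ i, ∑ s, y i s = 1)
    (hcon : ∀ j, (L j : ℝ) ≤ ∑ p ∈ E j, y p.1 p.2 ∧ ∑ p ∈ E j, y p.1 p.2 ≤ U j) :
    ∃ a : N → S, ∀ j,
      (L j : ℝ) ≤ ∑ p ∈ E j, (if a p.1 = p.2 then (1:ℝ) else 0) ∧
      ∑ p ∈ E j, (if a p.1 = p.2 then (1:ℝ) else 0) ≤ U j := by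
  exact main_ind E L U hlam (meas E y) y hnn hrow hcon (le_refl _)
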